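/- arXiv:1702.03908 — 3 statements merged into one kernel-verified Lean document; each statement's English description precedes it below -/
import Mathlib

section
/- Let f(q1,q2) = α(q1+q2) − β(q2 − P·q1)² on the rectangle [0,Q1]×[0,Q2] with P > 0, β = min(1/(1+2P²Q1+ε), 1/(1+2Q2+ε)) for some ε > 0, and α = 1 − β. Then for all (q1,q2) in the rectangle, ∂f/∂q1 > 0 and ∂f/∂q2 > 0. -/
/-- strict monotonicity of the merge objective
`f(q1,q2) = α(q1+q2) − β(q2 − P q1)²` in each variable on `[0,Q1]×[0,Q2]`,
with `β = min(1/(1+2P²Q1+ε), 1/(1+2Q2+ε))` and `α = 1 − β`. -/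
theorem stmt0 (Q1 Q2 P ε : ℝ) (hQ1 : 0 < Q1) (hQ2 : 0 < Q2) (hP : 0 < P) (hε : 0 < ε)
    (β : ℝ) (hβ : β = min (1 / (1 + 2 * P ^ 2 * Q1 + ε)) (1 / (1 + 2 * Q2 + ε)))
    (α : ℝ) (hα : α = 1 - β)
    (f : ℝ → ℝ → ℝ)
    (hf : ∀ q1 q2, f q1 q2 = α * (q1 + q2) - β * (q2 - P * q1) ^ 2) :
    ∀ q1 ∈ Set.Icc (0 : ℝ) Q1, ∀ q2 ∈ Set.Icc (0 : ℝ) Q2,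
      0 < deriv (fun x => f x q2) q1 ∧ 0 < deriv (fun y => f q1 y) q2 := by
  intro q1 hq1 q2 hq2
  obtain ⟨hq10, hq1Q⟩ := hq1
  obtain ⟨hq20, hq2Q⟩ := hq2
  have hd1 : 0 < 1 + 2 * P ^ 2 * Q1 + ε := by positivity
  have hd2 : 0 < 1 + 2 * Q2 + ε := by positivity
  have hβpos : 0 < β := by
    rw [hβ]; exact lt_min (by positivity) (by positivity)
  have hβ1 : β * (1 + 2 * P ^ 2 * Q1 + ε) ≤ 1 := by
    have : β ≤ 1 / (1 + 2 * P ^ 2 * Q1 + ε) := hβ ▸ min_le_left _ _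
    calc β * (1 + 2 * P ^ 2 * Q1 + ε) ≤ 1 / (1 + 2 * P ^ 2 * Q1 + ε) * (1 + 2 * P ^ 2 * Q1 + ε) :=
          by apply mul_le_mul_of_nonneg_right this hd1.le
      _ = 1 := by field_simp
  have hβ2 : β * (1 + 2 * Q2 + ε) ≤ 1 := by
    have : β ≤ 1 / (1 + 2 * Q2 + ε) := hβ ▸ min_le_right _ _
    calc β * (1 + 2 * Q2 + ε) ≤ 1 / (1 + 2 * Q2 + ε) * (1 + 2 * Q2 + ε) :=
          by apply mul_le_mul_of_nonneg_right this hd2.le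
      _ = 1 := by field_simp
  have hD1 : deriv (fun x => f x q2) q1 = α + 2 * β * P * (q2 - P * q1) := by
    have h : (fun x => f x q2) = fun x => α * (x + q2) - β * (q2 - P * x) ^ 2 := by
      funext x; rw [hf]
    rw [h]
    have hh : HasDerivAt (fun x => α * (x + q2) - β * (q2 - P * x) ^ 2)
        (α + 2 * β * P * (q2 - P * q1)) q1 := by
      have h1 : HasDerivAt (fun x : ℝ => α * (x + q2)) (α * 1) q1 :=
        ((hasDerivAt_id q1).add_const q2).const_mul α
      have h2 : HasDerivAt (fun x : ℝ => q2 - P * x) (0 - P * 1) q1 :=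
        (hasDerivAt_const q1 q2).sub ((hasDerivAt_id q1).const_mul P)
      have h3 := ((h2.pow 2).const_mul β)
      have := h1.sub h3
      exact this.congr_deriv (by ring)
    exact hh.deriv
  have hD2 : deriv (fun y => f q1 y) q2 = α - 2 * β * (q2 - P * q1) := by
    have h : (fun y => f q1 y) = fun y => α * (q1 + y) - β * (y - P * q1) ^ 2 := by
      funext y; rw [hf]
    rw [h]
    have hh : HasDerivAt (fun y : ℝ => α * (q1 + y) - β * (y - P * q1) ^ 2)
        (α - 2 * β * (q2 - P * q1)) q2 := by
      have h1 : HasDerivAt (fun y : ℝ => α * (q1 + y)) (α * 1) q2 :=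
        ((hasDerivAt_id q2).const_add q1).const_mul α
      have h2 : HasDerivAt (fun y : ℝ => y - P * q1) 1 q2 :=
        (hasDerivAt_id q2).sub_const (P * q1)
      have h3 := ((h2.pow 2).const_mul β)
      have := h1.sub h3
      exact this.congr_deriv (by ring)
    exact hh.deriv
  constructor
  · rw [hD1, hα]
    -- need: 0 < 1 - β + 2βP(q2 - Pq1), worst case q2=0, q1=Q1
    have key : β * (1 + 2 * P ^ 2 * Q1) < 1 := by
      nlinarith [mul_pos hβpos hε]
    have hmono : 2 * β * P * (q2 - P * q1) ≥ -(β * (2 * P ^ 2 * Q1)) := by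
      nlinarith [mul_nonneg (mul_nonneg hβpos.le hP.le) hq20,
        mul_nonneg (mul_nonneg (mul_nonneg hβpos.le hP.le) hP.le) (sub_nonneg.mpr hq1Q)]
    nlinarith
  · rw [hD2, hα]
    have key : β * (1 + 2 * Q2) < 1 := by
      nlinarith [mul_pos hβpos hε]
    have hmono : 2 * β * (q2 - P * q1) ≤ β * (2 * Q2) := by
      nlinarith [mul_nonneg (mul_nonneg hβpos.le hP.le) hq10]
    nlinarith
end

section
/- Consider the linear program: maximize Σ_{j=1}^{n} c_j x_j subject to 0 ≤ x_j ≤ M for all j and cumulative constraints Σ_{η=1}^{j} x_η ≤ B_j for all j, where B_1 ≤ B_2 ≤ … ≤ B_n and c_1 > c_2 > … > c_n > 0. Then the unique optimal solution is given greedily: x_1* = min(M, B_1), and x_j* = min(M, B_j − Σ_{η<j} x_η*) for j ≥ 2. -/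
/-- greedy LP: maximize `Σ c_j x_j` subject to `0 ≤ x_j ≤ M` and
cumulative constraints `Σ_{η≤j} x_η ≤ B_j`, with `B` nondecreasing,
`c` strictly decreasing and positive.  The greedy solution
`x*_j = min(M, B_j − Σ_{η<j} x*_η)` is feasible and the unique optimum. -/
theorem stmt9 (n : ℕ) (c B : Fin n → ℝ) (M : ℝ) (hM : 0 ≤ M)
    (hB0 : ∀ j : Fin n, 0 ≤ B j)
    (hBmono : ∀ i j : Fin n, i ≤ j → B i ≤ B j)
    (hcpos : ∀ j, 0 < c j)
    (hcdec : ∀ i j : Fin n, i < j → c j < c i)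
    (x : Fin n → ℝ)
    (hx : ∀ j, x j = min M (B j - ∑ η ∈ Finset.Iio j, x η)) :
    (∀ j, 0 ≤ x j ∧ x j ≤ M ∧ ∑ η ∈ Finset.Iic j, x η ≤ B j) ∧
      ∀ y : Fin n → ℝ,
        (∀ j, 0 ≤ y j ∧ y j ≤ M ∧ ∑ η ∈ Finset.Iic j, y η ≤ B j) →
        (∑ j, c j * y j ≤ ∑ j, c j * x j) ∧
          (∑ j, c j * y j = ∑ j, c j * x j → y = x) := by
  -- Iio/Iic bookkeeping
  have hnm : ∀ j : Fin n, j ∉ Finset.Iio j := by simp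
  have hIio0 : ∀ j : Fin n, (j : ℕ) = 0 → Finset.Iio j = ∅ := by
    intro j hj; ext k
    simp only [Finset.mem_Iio, Finset.notMem_empty, iff_false, Fin.lt_def, hj]
    omega
  have hIioIic : ∀ j i : Fin n, (i : ℕ) + 1 = (j : ℕ) →
      Finset.Iio j = Finset.Iic i := by
    intro j i hij; ext k
    simp only [Finset.mem_Iio, Finset.mem_Iic, Fin.lt_def, Fin.le_def]
    omega
  -- the key closed form for partial sums of x
  have hsum : ∀ j : Fin n, ∑ η ∈ Finset.Iic j, x η
      = min ((∑ η ∈ Finset.Iio j, x η) + M) (B j) := by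
    intro j
    rw [← Finset.Iio_insert, Finset.sum_insert (hnm j), hx j]
    rcases le_total M (B j - ∑ η ∈ Finset.Iio j, x η) with h | h
    · rw [min_eq_left h, min_eq_left (by linarith)]; ring
    · rw [min_eq_right h, min_eq_right (by linarith)]; ring
  -- partial sums of x over Iio are at most B j
  have hS : ∀ j : Fin n, ∑ η ∈ Finset.Iio j, x η ≤ B j := by
    intro j
    rcases Nat.eq_zero_or_pos (j : ℕ) with h0 | hpos
    · rw [hIio0 j h0]; simpa using hB0 j
    · have hj : ((j : ℕ) - 1) < n := lt_of_le_of_lt (Nat.sub_le _ _) j.2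
      set i : Fin n := ⟨(j : ℕ) - 1, hj⟩
      have hij : (i : ℕ) + 1 = (j : ℕ) := by show (j : ℕ) - 1 + 1 = (j : ℕ); omega
      rw [hIioIic j i hij, hsum i]
      exact le_trans (min_le_right _ _)
        (hBmono i j (Fin.le_def.mpr (Nat.sub_le _ _)))
  -- feasibility of x
  have hfeas : ∀ j, 0 ≤ x j ∧ x j ≤ M ∧ ∑ η ∈ Finset.Iic j, x η ≤ B j := by
    intro j
    refine ⟨?_, ?_, ?_⟩
    · rw [hx j]; exact le_min hM (by linarith [hS j])
    · rw [hx j]; exact min_le_left _ _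
    · rw [hsum j]; exact min_le_right _ _
  refine ⟨hfeas, ?_⟩
  intro y hy
  -- the invariant: partial sums of y are dominated by those of x
  have key : ∀ m : ℕ, ∀ j : Fin n, (j : ℕ) ≤ m →
      ∑ η ∈ Finset.Iic j, y η ≤ ∑ η ∈ Finset.Iic j, x η := by
    intro m
    induction m with
    | zero =>
      intro j hj
      have hIio := hIio0 j (Nat.le_zero.mp hj)
      rw [hsum j]
      refine le_min ?_ (hy j).2.2
      rw [← Finset.Iio_insert, Finset.sum_insert (hnm j), hIio]
      simpa using (hy j).2.1
    | succ m ih =>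
      intro j hj
      rcases Nat.lt_or_ge (j : ℕ) (m + 1) with h | h
      · exact ih j (Nat.lt_succ_iff.mp h)
      · have hjm : (j : ℕ) = m + 1 := le_antisymm hj h
        have hmn : m < n := lt_of_lt_of_le (by omega) (le_of_lt j.2)
        set i : Fin n := ⟨m, hmn⟩
        have hij : (i : ℕ) + 1 = (j : ℕ) := by show m + 1 = (j : ℕ); omega
        rw [hsum j]
        refine le_min ?_ (hy j).2.2
        rw [← Finset.Iio_insert, Finset.sum_insert (hnm j), hIioIic j i hij]
        have h1 := ih i (le_refl m)
        have h2 := (hy j).2.1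
        linarith
  have hPle : ∀ j : Fin n, ∑ η ∈ Finset.Iic j, y η ≤ ∑ η ∈ Finset.Iic j, x η :=
    fun j => key (j : ℕ) j (le_refl _)
  -- Abel summation setup
  set z : Fin n → ℝ := fun j => y j - x j with hz
  set P : Fin n → ℝ := fun k => ∑ η ∈ Finset.Iic k, z η with hP
  have hPnonpos : ∀ k, P k ≤ 0 := by
    intro k
    have h1 : P k = (∑ η ∈ Finset.Iic k, y η) - ∑ η ∈ Finset.Iic k, x η := by
      show ∑ η ∈ Finset.Iic k, (y η - x η) = _
      rw [Finset.sum_sub_distrib]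
    rw [h1]; linarith [hPle k]
  set D : Fin n → ℝ :=
    fun k => c k - (if h : (k : ℕ) + 1 < n then c ⟨(k : ℕ) + 1, h⟩ else 0) with hD
  have hDpos : ∀ k, 0 < D k := by
    intro k
    show 0 < c k - (if h : (k : ℕ) + 1 < n then c ⟨(k : ℕ) + 1, h⟩ else 0)
    by_cases h : (k : ℕ) + 1 < n
    · rw [dif_pos h]
      have : c ⟨(k : ℕ) + 1, h⟩ < c k :=
        hcdec k ⟨(k : ℕ) + 1, h⟩ (by simp [Fin.lt_def])
      linarith
    · rw [dif_neg h]; simpa using hcpos k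
  -- telescoping: c j = Σ_{k ∈ Ici j} D k
  have hnmIoi : ∀ j : Fin n, j ∉ Finset.Ioi j := by simp
  have hIoiIci : ∀ j k : Fin n, (j : ℕ) + 1 = (k : ℕ) →
      Finset.Ioi j = Finset.Ici k := by
    intro j k hjk; ext m
    simp only [Finset.mem_Ioi, Finset.mem_Ici, Fin.lt_def, Fin.le_def]
    omega
  have hIoi0 : ∀ j : Fin n, (j : ℕ) + 1 = n → Finset.Ioi j = ∅ := by
    intro j hj; ext m
    simp only [Finset.mem_Ioi, Finset.notMem_empty, iff_false, Fin.lt_def]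
    have := m.2; omega
  have htel : ∀ m : ℕ, ∀ j : Fin n, n - (j : ℕ) ≤ m →
      ∑ k ∈ Finset.Ici j, D k = c j := by
    intro m
    induction m with
    | zero => intro j hj; exact absurd hj (by have := j.2; omega)
    | succ m ih =>
      intro j hj
      rw [← Finset.Ioi_insert, Finset.sum_insert (hnmIoi j)]
      by_cases h : (j : ℕ) + 1 < n
      · set k : Fin n := ⟨(j : ℕ) + 1, h⟩
        have hrec : ∑ l ∈ Finset.Ici k, D l = c k :=
          ih k (by show n - ((j : ℕ) + 1) ≤ m; have := j.2; omega)
        have hDj : D j = c j - c k := by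
          show c j - (if h' : (j : ℕ) + 1 < n then c ⟨(j : ℕ) + 1, h'⟩ else 0) = _
          rw [dif_pos h]
        rw [hIoiIci j k rfl, hrec, hDj]; ring
      · have hjn : (j : ℕ) + 1 = n := by have := j.2; omega
        have hDj : D j = c j := by
          show c j - (if h' : (j : ℕ) + 1 < n then c ⟨(j : ℕ) + 1, h'⟩ else 0) = _
          rw [dif_neg h]; ring
        rw [hIoi0 j hjn, hDj]; simp
  have hc_eq : ∀ j : Fin n, c j = ∑ k ∈ Finset.Ici j, D k :=
    fun j => (htel n j (Nat.sub_le _ _)).symm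
  -- the summation-by-parts identity
  have hswap : ∑ j, c j * z j = ∑ k, D k * P k := by
    calc ∑ j, c j * z j = ∑ j, ∑ k ∈ Finset.Ici j, D k * z j := by
          refine Finset.sum_congr rfl (fun j _ => ?_)
          rw [hc_eq j, Finset.sum_mul]
      _ = ∑ j : Fin n, ∑ k : Fin n, if j ≤ k then D k * z j else 0 := by
          refine Finset.sum_congr rfl (fun j _ => ?_)
          rw [← Finset.sum_filter]
          congr 1
          ext k; simp
      _ = ∑ k : Fin n, ∑ j : Fin n, if j ≤ k then D k * z j else 0 :=
          Finset.sum_comm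
      _ = ∑ k : Fin n, ∑ j ∈ Finset.Iic k, D k * z j := by
          refine Finset.sum_congr rfl (fun k _ => ?_)
          rw [← Finset.sum_filter]
          congr 1
          ext j; simp
      _ = ∑ k, D k * P k := by
          refine Finset.sum_congr rfl (fun k _ => ?_)
          rw [Finset.mul_sum]
  have hdiff : ∑ j, c j * y j - ∑ j, c j * x j = ∑ k, D k * P k := by
    rw [← hswap, ← Finset.sum_sub_distrib]
    refine Finset.sum_congr rfl (fun j _ => ?_)
    show c j * y j - c j * x j = c j * (y j - x j)
    ring
  have hterm_nonpos : ∀ k ∈ (Finset.univ : Finset (Fin n)), D k * P k ≤ 0 :=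
    fun k _ => mul_nonpos_of_nonneg_of_nonpos (le_of_lt (hDpos k)) (hPnonpos k)
  constructor
  · have : ∑ k, D k * P k ≤ 0 := Finset.sum_nonpos hterm_nonpos
    linarith
  · intro heq
    have hzero : ∑ k, D k * P k = 0 := by rw [← hdiff, heq]; ring
    have hPzero : ∀ k : Fin n, P k = 0 := by
      intro k
      have := (Finset.sum_eq_zero_iff_of_nonpos hterm_nonpos).mp hzero k
        (Finset.mem_univ k)
      rcases mul_eq_zero.mp this with h | h
      · exact absurd h (ne_of_gt (hDpos k))
      · exact h
    -- from P ≡ 0 deduce z ≡ 0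
    have hzzero : ∀ j : Fin n, z j = 0 := by
      intro j
      have h1 : z j = P j - ∑ η ∈ Finset.Iio j, z η := by
        show z j = (∑ η ∈ Finset.Iic j, z η) - _
        rw [← Finset.Iio_insert, Finset.sum_insert (hnm j)]
        ring
      rcases Nat.eq_zero_or_pos (j : ℕ) with h0 | hpos
      · rw [h1, hIio0 j h0, hPzero j]; simp
      · have hj : ((j : ℕ) - 1) < n := lt_of_le_of_lt (Nat.sub_le _ _) j.2
        set i : Fin n := ⟨(j : ℕ) - 1, hj⟩
        have hij : (i : ℕ) + 1 = (j : ℕ) := by show (j : ℕ) - 1 + 1 = (j : ℕ); omega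
        rw [h1, hIioIic j i hij]
        have h2 : ∑ η ∈ Finset.Iic i, z η = P i := rfl
        rw [h2, hPzero j, hPzero i]; ring
    funext j
    have h3 : y j - x j = 0 := hzzero j
    linarith
end

section
/- Consider the two-interval merge problem: maximize f over {(q1(1),q2(1),q1(2),q2(2)) : cumulative constraints Σ_{η≤j} q_l(η)Δt_η ≤ N_l(j) for l ∈ {1,2} (sending bounds, nondecreasing in j) and Σ_{η≤j} (q1(η)+q2(η))Δt_η ≤ N_3(j) (receiving bound), all flows in [0, q^max]}. Suppose f is differentiable concave and satisfies: ∂f/∂q_l(1)/Δt_1 > ∂f/∂q_l(2)/Δt_2 > 0 for l ∈ {1,2}. Then any maximizer (q*) of f maximizes throughput at interval 1, i.e., q1*(1) + q2*(1) = max{q1+q2 : q1Δt_1 ≤ N_1(1), q2Δt_1 ≤ N_2(1), (q1+q2)Δt_1 ≤ N_3(1), 0 ≤ q_l ≤ q^max}. -/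
open Filter Topology

lemma no_ascent (f : ℝ × ℝ × ℝ × ℝ → ℝ) (hdiff : Differentiable ℝ f)
    (F : Set (ℝ × ℝ × ℝ × ℝ)) (q : ℝ × ℝ × ℝ × ℝ)
    (hmax : ∀ p ∈ F, f p ≤ f q) (v : ℝ × ℝ × ℝ × ℝ) (t0 : ℝ) (ht0 : 0 < t0)
    (hfeas : ∀ t : ℝ, 0 < t → t ≤ t0 → q + t • v ∈ F) :
    fderiv ℝ f q v ≤ 0 := by
  by_contra h
  push_neg at h
  have hline : HasDerivAt (fun t : ℝ => q + t • v) v 0 := by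
    simpa using ((hasDerivAt_id (0:ℝ)).smul_const v).const_add q
  have hg : HasDerivAt (fun t : ℝ => f (q + t • v)) (fderiv ℝ f q v) 0 := by
    have hf : HasFDerivAt f (fderiv ℝ f q) (q + (0:ℝ) • v) := by
      simpa using (hdiff q).hasFDerivAt
    exact hf.comp_hasDerivAt 0 hline
  have hslope := hasDerivAt_iff_tendsto_slope.mp hg
  have hev1 : ∀ᶠ t in 𝓝[>] (0:ℝ), 0 < slope (fun t : ℝ => f (q + t • v)) 0 t := by
    have := hslope.eventually (eventually_gt_nhds h)
    exact this.filter_mono (nhdsWithin_mono _ (fun x hx => ne_of_gt hx))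
  have hev2 : ∀ᶠ t in 𝓝[>] (0:ℝ), t < t0 :=
    eventually_nhdsWithin_of_eventually_nhds (eventually_lt_nhds ht0)
  obtain ⟨t, ⟨hpos, htlt⟩, ht⟩ := ((hev1.and hev2).and self_mem_nhdsWithin).exists
  rw [slope_def_field] at hpos
  rcases div_pos_iff.mp hpos with ⟨hnum, _⟩ | ⟨_, hden⟩
  · have h2 := hmax _ (hfeas t ht (le_of_lt htlt))
    simp only [zero_smul, add_zero] at hnum
    linarith
  · linarith

set_option maxHeartbeats 1000000 in
/-- two-interval merge problem. A point of the feasible set is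
`(q1(1), q2(1), q1(2), q2(2))`. If the differentiable concave objective weights
interval 1 strictly more than interval 2 (per unit time) for both upstream
links, then any maximizer maximizes the throughput `q1(1) + q2(1)` at the
first interval. -/
theorem stmt11 (Δt1 Δt2 qmax : ℝ) (hΔt1 : 0 < Δt1) (hΔt2 : 0 < Δt2)
    (hqmax : 0 ≤ qmax)
    (N11 N12 N21 N22 N31 N32 : ℝ)
    (hN11 : 0 ≤ N11) (hN21 : 0 ≤ N21) (hN31 : 0 ≤ N31)
    (hN1mono : N11 + qmax * Δt2 ≤ N12) (hN2mono : N21 + qmax * Δt2 ≤ N22)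
    (hN3mono : N31 + qmax * Δt2 ≤ N32)
    (F : Set (ℝ × ℝ × ℝ × ℝ))
    (hF : F = {q : ℝ × ℝ × ℝ × ℝ |
      0 ≤ q.1 ∧ q.1 ≤ qmax ∧ 0 ≤ q.2.1 ∧ q.2.1 ≤ qmax ∧
      0 ≤ q.2.2.1 ∧ q.2.2.1 ≤ qmax ∧ 0 ≤ q.2.2.2 ∧ q.2.2.2 ≤ qmax ∧
      q.1 * Δt1 ≤ N11 ∧ q.1 * Δt1 + q.2.2.1 * Δt2 ≤ N12 ∧
      q.2.1 * Δt1 ≤ N21 ∧ q.2.1 * Δt1 + q.2.2.2 * Δt2 ≤ N22 ∧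
      (q.1 + q.2.1) * Δt1 ≤ N31 ∧
      (q.1 + q.2.1) * Δt1 + (q.2.2.1 + q.2.2.2) * Δt2 ≤ N32})
    (f : ℝ × ℝ × ℝ × ℝ → ℝ) (hdiff : Differentiable ℝ f)
    (hconc : ConcaveOn ℝ F f)
    (hgrad1 : ∀ p ∈ F,
      fderiv ℝ f p (1, 0, 0, 0) / Δt1 > fderiv ℝ f p (0, 0, 1, 0) / Δt2 ∧
        0 < fderiv ℝ f p (0, 0, 1, 0) / Δt2)
    (hgrad2 : ∀ p ∈ F,
      fderiv ℝ f p (0, 1, 0, 0) / Δt1 > fderiv ℝ f p (0, 0, 0, 1) / Δt2 ∧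
        0 < fderiv ℝ f p (0, 0, 0, 1) / Δt2) :
    ∀ q ∈ F, (∀ p ∈ F, f p ≤ f q) →
      ∀ q1 q2 : ℝ, 0 ≤ q1 → q1 ≤ qmax → 0 ≤ q2 → q2 ≤ qmax →
        q1 * Δt1 ≤ N11 → q2 * Δt1 ≤ N21 → (q1 + q2) * Δt1 ≤ N31 →
        q1 + q2 ≤ q.1 + q.2.1 := by
  intro q hq hmax q1 q2 hq10 hq1M hq20 hq2M hq1N hq2N hq12N
  obtain ⟨a, b, c, d⟩ := q
  simp only
  by_contra hcon
  push_neg at hcon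
  have hq' := hq
  rw [hF] at hq'
  simp only [Set.mem_setOf_eq] at hq'
  obtain ⟨ha0, haM, hb0, hbM, hc0, hcM, hd0, hdM, hA, hB, hC, hD, hE, hG⟩ := hq'
  have hN31lt : (a + b) * Δt1 < N31 := by
    have := mul_lt_mul_of_pos_right hcon hΔt1; linarith
  have hkey : a < q1 ∨ b < q2 := by
    by_contra hk; push_neg at hk; linarith [hk.1, hk.2]
  have hqmaxΔ : 0 ≤ qmax * Δt2 := mul_nonneg hqmax hΔt2.le
  rcases hkey with hak | hbk
  · -- link 1 has slack
    have haM' : a < qmax := lt_of_lt_of_le hak hq1M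
    have hN11lt : a * Δt1 < N11 := by
      have := mul_lt_mul_of_pos_right hak hΔt1; linarith
    rcases lt_or_ge 0 c with hcpos | hcle
    · -- c > 0 : direction (Δt2, 0, -Δt1, 0)
      set v : ℝ × ℝ × ℝ × ℝ := (Δt2, 0, -Δt1, 0) with hvdef
      set t0 := min (min ((qmax - a) / Δt2) ((N11 - a * Δt1) / (Δt1 * Δt2)))
          (min (c / Δt1) ((N31 - (a + b) * Δt1) / (Δt1 * Δt2))) with ht0def
      have ht0 : 0 < t0 :=
        lt_min (lt_min (div_pos (by linarith) hΔt2)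
            (div_pos (by linarith) (by positivity)))
          (lt_min (div_pos hcpos hΔt1) (div_pos (by linarith) (by positivity)))
      have hfeas : ∀ t : ℝ, 0 < t → t ≤ t0 → ((a, b, c, d) : ℝ × ℝ × ℝ × ℝ) + t • v ∈ F := by
        intro t ht htle
        have e1 : t * Δt2 ≤ qmax - a :=
          (le_div_iff₀ hΔt2).mp (le_trans htle (le_trans (min_le_left _ _) (min_le_left _ _)))
        have e2 : t * (Δt1 * Δt2) ≤ N11 - a * Δt1 :=
          (le_div_iff₀ (by positivity)).mp
            (le_trans htle (le_trans (min_le_left _ _) (min_le_right _ _)))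
        have e3 : t * Δt1 ≤ c :=
          (le_div_iff₀ hΔt1).mp (le_trans htle (le_trans (min_le_right _ _) (min_le_left _ _)))
        have e4 : t * (Δt1 * Δt2) ≤ N31 - (a + b) * Δt1 :=
          (le_div_iff₀ (by positivity)).mp
            (le_trans htle (le_trans (min_le_right _ _) (min_le_right _ _)))
        rw [hF]
        simp only [hvdef, Prod.smul_mk, smul_eq_mul, Prod.mk_add_mk, Set.mem_setOf_eq,
          mul_zero, add_zero]
        have p1 : 0 < t * Δt2 := mul_pos ht hΔt2
        have p2 : 0 < t * Δt1 := mul_pos ht hΔt1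
        refine ⟨by linarith, by linarith, hb0, hbM, by linarith, by linarith, hd0, hdM,
          by linarith [e2], by linarith [hB], hC, hD, by linarith [e4], by linarith [hG]⟩
      have hle := no_ascent f hdiff F (a, b, c, d) hmax v t0 ht0 hfeas
      obtain ⟨hg1, hg2⟩ := hgrad1 (a, b, c, d) hq
      have hv : v = Δt2 • ((1:ℝ), (0:ℝ), (0:ℝ), (0:ℝ)) - Δt1 • ((0:ℝ), (0:ℝ), (1:ℝ), (0:ℝ)) := by
        simp [hvdef, Prod.ext_iff]
      have hlin : fderiv ℝ f (a, b, c, d) v =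
          Δt2 * fderiv ℝ f (a, b, c, d) (1, 0, 0, 0)
            - Δt1 * fderiv ℝ f (a, b, c, d) (0, 0, 1, 0) := by
        rw [hv, map_sub, map_smul, map_smul]; rfl
      have hdd := (div_lt_div_iff₀ hΔt2 hΔt1).mp hg1
      rw [hlin] at hle
      linarith
    · -- c = 0 : direction (1, 0, 0, 0)
      have hc : c = 0 := le_antisymm hcle hc0
      set v : ℝ × ℝ × ℝ × ℝ := (1, 0, 0, 0) with hvdef
      set t0 := min (min (qmax - a) ((N11 - a * Δt1) / Δt1))
          ((N31 - (a + b) * Δt1) / Δt1) with ht0def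
      have ht0 : 0 < t0 :=
        lt_min (lt_min (by linarith) (div_pos (by linarith) hΔt1))
          (div_pos (by linarith) hΔt1)
      have hfeas : ∀ t : ℝ, 0 < t → t ≤ t0 → ((a, b, c, d) : ℝ × ℝ × ℝ × ℝ) + t • v ∈ F := by
        intro t ht htle
        have e1 : t ≤ qmax - a := le_trans htle (le_trans (min_le_left _ _) (min_le_left _ _))
        have e2 : t * Δt1 ≤ N11 - a * Δt1 :=
          (le_div_iff₀ hΔt1).mp (le_trans htle (le_trans (min_le_left _ _) (min_le_right _ _)))
        have e4 : t * Δt1 ≤ N31 - (a + b) * Δt1 :=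
          (le_div_iff₀ hΔt1).mp (le_trans htle (min_le_right _ _))
        have hdΔ : d * Δt2 ≤ qmax * Δt2 := mul_le_mul_of_nonneg_right hdM hΔt2.le
        rw [hF]
        simp only [hvdef, Prod.smul_mk, smul_eq_mul, Prod.mk_add_mk, Set.mem_setOf_eq,
          mul_zero, add_zero, mul_one]
        have hc2 : c * Δt2 = 0 := by rw [hc]; ring
        refine ⟨by linarith, by linarith, hb0, hbM, hc0, hcM, hd0, hdM,
          by linarith [e2], by linarith [e2, hc2], hC, hD,
          by linarith [e4], by linarith [e4, hc2, hdΔ]⟩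
      have hle := no_ascent f hdiff F (a, b, c, d) hmax v t0 ht0 hfeas
      obtain ⟨hg1, hg2⟩ := hgrad1 (a, b, c, d) hq
      have h0 : 0 < fderiv ℝ f (a, b, c, d) (1, 0, 0, 0) / Δt1 := lt_trans hg2 hg1
      have h1 : 0 < fderiv ℝ f (a, b, c, d) (1, 0, 0, 0) := by
        have := mul_pos h0 hΔt1
        rwa [div_mul_cancel₀ _ (ne_of_gt hΔt1)] at this
      exact absurd hle (not_le.mpr h1)
  · -- link 2 has slack
    have hbM' : b < qmax := lt_of_lt_of_le hbk hq2M
    have hN21lt : b * Δt1 < N21 := by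
      have := mul_lt_mul_of_pos_right hbk hΔt1; linarith
    rcases lt_or_ge 0 d with hdpos | hdle
    · set v : ℝ × ℝ × ℝ × ℝ := (0, Δt2, 0, -Δt1) with hvdef
      set t0 := min (min ((qmax - b) / Δt2) ((N21 - b * Δt1) / (Δt1 * Δt2)))
          (min (d / Δt1) ((N31 - (a + b) * Δt1) / (Δt1 * Δt2))) with ht0def
      have ht0 : 0 < t0 :=
        lt_min (lt_min (div_pos (by linarith) hΔt2)
            (div_pos (by linarith) (by positivity)))
          (lt_min (div_pos hdpos hΔt1) (div_pos (by linarith) (by positivity)))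
      have hfeas : ∀ t : ℝ, 0 < t → t ≤ t0 → ((a, b, c, d) : ℝ × ℝ × ℝ × ℝ) + t • v ∈ F := by
        intro t ht htle
        have e1 : t * Δt2 ≤ qmax - b :=
          (le_div_iff₀ hΔt2).mp (le_trans htle (le_trans (min_le_left _ _) (min_le_left _ _)))
        have e2 : t * (Δt1 * Δt2) ≤ N21 - b * Δt1 :=
          (le_div_iff₀ (by positivity)).mp
            (le_trans htle (le_trans (min_le_left _ _) (min_le_right _ _)))
        have e3 : t * Δt1 ≤ d :=
          (le_div_iff₀ hΔt1).mp (le_trans htle (le_trans (min_le_right _ _) (min_le_left _ _)))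
        have e4 : t * (Δt1 * Δt2) ≤ N31 - (a + b) * Δt1 :=
          (le_div_iff₀ (by positivity)).mp
            (le_trans htle (le_trans (min_le_right _ _) (min_le_right _ _)))
        rw [hF]
        simp only [hvdef, Prod.smul_mk, smul_eq_mul, Prod.mk_add_mk, Set.mem_setOf_eq,
          mul_zero, add_zero]
        have p1 : 0 < t * Δt2 := mul_pos ht hΔt2
        have p2 : 0 < t * Δt1 := mul_pos ht hΔt1
        refine ⟨ha0, haM, by linarith, by linarith, hc0, hcM, by linarith, by linarith,
          hA, hB, by linarith [e2], by linarith [hD], by linarith [e4], by linarith [hG]⟩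
      have hle := no_ascent f hdiff F (a, b, c, d) hmax v t0 ht0 hfeas
      obtain ⟨hg1, hg2⟩ := hgrad2 (a, b, c, d) hq
      have hv : v = Δt2 • ((0:ℝ), (1:ℝ), (0:ℝ), (0:ℝ)) - Δt1 • ((0:ℝ), (0:ℝ), (0:ℝ), (1:ℝ)) := by
        simp [hvdef, Prod.ext_iff]
      have hlin : fderiv ℝ f (a, b, c, d) v =
          Δt2 * fderiv ℝ f (a, b, c, d) (0, 1, 0, 0)
            - Δt1 * fderiv ℝ f (a, b, c, d) (0, 0, 0, 1) := by
        rw [hv, map_sub, map_smul, map_smul]; rfl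
      have hdd := (div_lt_div_iff₀ hΔt2 hΔt1).mp hg1
      rw [hlin] at hle
      linarith
    · have hd : d = 0 := le_antisymm hdle hd0
      set v : ℝ × ℝ × ℝ × ℝ := (0, 1, 0, 0) with hvdef
      set t0 := min (min (qmax - b) ((N21 - b * Δt1) / Δt1))
          ((N31 - (a + b) * Δt1) / Δt1) with ht0def
      have ht0 : 0 < t0 :=
        lt_min (lt_min (by linarith) (div_pos (by linarith) hΔt1))
          (div_pos (by linarith) hΔt1)
      have hfeas : ∀ t : ℝ, 0 < t → t ≤ t0 → ((a, b, c, d) : ℝ × ℝ × ℝ × ℝ) + t • v ∈ F := by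
        intro t ht htle
        have e1 : t ≤ qmax - b := le_trans htle (le_trans (min_le_left _ _) (min_le_left _ _))
        have e2 : t * Δt1 ≤ N21 - b * Δt1 :=
          (le_div_iff₀ hΔt1).mp (le_trans htle (le_trans (min_le_left _ _) (min_le_right _ _)))
        have e4 : t * Δt1 ≤ N31 - (a + b) * Δt1 :=
          (le_div_iff₀ hΔt1).mp (le_trans htle (min_le_right _ _))
        have hcΔ : c * Δt2 ≤ qmax * Δt2 := mul_le_mul_of_nonneg_right hcM hΔt2.le
        rw [hF]
        simp only [hvdef, Prod.smul_mk, smul_eq_mul, Prod.mk_add_mk, Set.mem_setOf_eq,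
          mul_zero, add_zero, mul_one]
        have hd2 : d * Δt2 = 0 := by rw [hd]; ring
        refine ⟨ha0, haM, by linarith, by linarith, hc0, hcM, hd0, hdM,
          hA, hB, by linarith [e2], by linarith [e2, hd2], 
          by linarith [e4], by linarith [e4, hd2, hcΔ]⟩
      have hle := no_ascent f hdiff F (a, b, c, d) hmax v t0 ht0 hfeas
      obtain ⟨hg1, hg2⟩ := hgrad2 (a, b, c, d) hq
      have h0 : 0 < fderiv ℝ f (a, b, c, d) (0, 1, 0, 0) / Δt1 := lt_trans hg2 hg1
      have h1 : 0 < fderiv ℝ f (a, b, c, d) (0, 1, 0, 0) := by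
        have := mul_pos h0 hΔt1
        rwa [div_mul_cancel₀ _ (ne_of_gt hΔt1)] at this
      exact absurd hle (not_le.mpr h1)
end
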